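/- No-cloning theorem: there is no unitary operator U on H ⊗ H and fixed state |e⟩ ∈ H such that U(|ψ⟩ ⊗ |e⟩) = |ψ⟩ ⊗ |ψ⟩ for all unit vectors |ψ⟩ in H, provided dim H ≥ 2. -/
import Mathlib


open scoped ComplexInnerProductSpace

/-- No-cloning theorem: if `H` is a complex Hilbert space of dimension ≥ 2 and
`HH` plays the role of `H ⊗ H` (via a bilinear map `tprod` whose inner products
factor), then there is no inner-product-preserving (unitary) linear operator `U`
on `HH` and fixed unit state `e` with `U (ψ ⊗ e) = ψ ⊗ ψ` for all unit vectors `ψ`. -/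
theorem no_cloning {H HH : Type*}
    [NormedAddCommGroup H] [InnerProductSpace ℂ H]
    [NormedAddCommGroup HH] [InnerProductSpace ℂ HH]
    (tprod : H →ₗ[ℂ] H →ₗ[ℂ] HH)
    (htp : ∀ a b c d : H, ⟪tprod a b, tprod c d⟫ = ⟪a, c⟫ * ⟪b, d⟫)
    (hdim : 2 ≤ Module.rank ℂ H) :
    ¬ ∃ (U : HH →ₗ[ℂ] HH) (e : H), ‖e‖ = 1 ∧
      (∀ x y : HH, ⟪U x, U y⟫ = ⟪x, y⟫) ∧
      (∀ ψ : H, ‖ψ‖ = 1 → U (tprod ψ e) = tprod ψ ψ) := by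
  rintro ⟨U, e, he, hU, hclone⟩
  -- key identity: for unit ψ φ, ⟪ψ,φ⟫² = ⟪ψ,φ⟫
  have key : ∀ ψ φ : H, ‖ψ‖ = 1 → ‖φ‖ = 1 → ⟪ψ, φ⟫ * ⟪ψ, φ⟫ = ⟪ψ, φ⟫ := by
    intro ψ φ hψ hφ
    have hee : ⟪e, e⟫ = (1 : ℂ) := by
      rw [inner_self_eq_norm_sq_to_K, he]; norm_num
    have h1 := hU (tprod ψ e) (tprod φ e)
    rw [hclone ψ hψ, hclone φ hφ, htp, htp, hee, mul_one] at h1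
    exact h1
  -- extract two linearly independent vectors
  obtain ⟨f, hf⟩ := exists_linearIndependent_of_le_rank
    (show ((2 : ℕ) : Cardinal) ≤ Module.rank ℂ H by exact_mod_cast hdim)
  rw [linearIndependent_fin2] at hf
  obtain ⟨hx0, hnm⟩ := hf
  set x := f 1 with hx_def
  set y := f 0 with hy_def
  have hxnorm : (‖x‖ : ℝ) ≠ 0 := norm_ne_zero_iff.mpr hx0
  set u : H := (‖x‖ : ℂ)⁻¹ • x with hu_def
  have hu : ‖u‖ = 1 := by
    simp [hu_def, norm_smul, inv_mul_cancel₀ hxnorm]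
  have huu : ⟪u, u⟫ = (1 : ℂ) := by
    rw [inner_self_eq_norm_sq_to_K, hu]; norm_num
  set w : H := y - ⟪u, y⟫ • u with hw_def
  have hw0 : w ≠ 0 := by
    intro h
    apply hnm (⟪u, y⟫ * (‖x‖ : ℂ)⁻¹)
    have hy : y = ⟪u, y⟫ • u := sub_eq_zero.mp h
    rw [mul_smul, ← hu_def]
    exact hy.symm
  have hwnorm : (‖w‖ : ℝ) ≠ 0 := norm_ne_zero_iff.mpr hw0
  set v : H := (‖w‖ : ℂ)⁻¹ • w with hv_def
  have hv : ‖v‖ = 1 := by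
    simp [hv_def, norm_smul, inv_mul_cancel₀ hwnorm]
  have hvv : ⟪v, v⟫ = (1 : ℂ) := by
    rw [inner_self_eq_norm_sq_to_K, hv]; norm_num
  have huw : ⟪u, w⟫ = 0 := by
    rw [hw_def, inner_sub_right, inner_smul_right, huu, mul_one, sub_self]
  have huv : ⟪u, v⟫ = 0 := by
    rw [hv_def, inner_smul_right, huw, mul_zero]
  have hvu : ⟪v, u⟫ = 0 := by
    rw [← inner_conj_symm, huv, map_zero]
  -- build φ = (u + v)/√2
  set c : ℂ := ((Real.sqrt 2 : ℝ) : ℂ)⁻¹ with hc_def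
  set φ : H := c • (u + v) with hφ_def
  have hs2 : Real.sqrt 2 > 0 := Real.sqrt_pos.mpr (by norm_num)
  have hs2sq : Real.sqrt 2 * Real.sqrt 2 = 2 := Real.mul_self_sqrt (by norm_num)
  have hφφ : ⟪φ, φ⟫ = 1 := by
    rw [hφ_def, inner_smul_left, inner_smul_right, inner_add_left, inner_add_right,
      inner_add_right, huu, huv, hvu, hvv]
    rw [hc_def, map_inv₀, Complex.conj_ofReal]
    have h2c : ((Real.sqrt 2 : ℝ) : ℂ) * ((Real.sqrt 2 : ℝ) : ℂ) = 2 := by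
      exact_mod_cast hs2sq
    have hne : ((Real.sqrt 2 : ℝ) : ℂ) ≠ 0 := by
      exact_mod_cast ne_of_gt hs2
    rw [show ((1:ℂ) + 0 + (0 + 1)) = 2 by ring, ← mul_assoc, ← mul_inv, h2c]
    norm_num
  have hφ : ‖φ‖ = 1 := by
    have hn2 : ‖φ‖^2 = 1 := by
      have h' := inner_self_eq_norm_sq (𝕜 := ℂ) φ
      rw [hφφ] at h'
      simpa using h'.symm
    nlinarith [norm_nonneg φ]
  have huφ : ⟪u, φ⟫ = c := by
    rw [hφ_def, inner_smul_right, inner_add_right, huu, huv]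
    ring
  have hk := key u φ hu hφ
  rw [huφ] at hk
  -- c * c = c where c = 1/√2, contradiction
  rw [hc_def] at hk
  have : ((Real.sqrt 2)⁻¹ * (Real.sqrt 2)⁻¹ : ℝ) = ((Real.sqrt 2)⁻¹ : ℝ) := by
    exact_mod_cast hk
  have h2 : (Real.sqrt 2)⁻¹ ≠ 0 := inv_ne_zero (ne_of_gt hs2)
  have := mul_right_cancel₀ h2 (this.trans (one_mul _).symm)
  rw [inv_eq_one] at this
  nlinarith [hs2sq]
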